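/- arXiv:1809.02029 — 6 statements merged into one kernel-verified Lean document; each statement's English description precedes it below -/
import Mathlib

section
/- For integers a < b and functions f, g : ℤ → ℝ, and a function α : ℤ → ℝ with 0 < α(t) ≤ 1 for all t, the following summation-by-parts identity holds: ∑_{t=a+1}^{b-1} f(t) · [ (1/Γ(α(t))) ∑_{s=a+1}^{t} (t-s+1)^{\overline{α(t)-1}} g(s) ] = ∑_{t=a+1}^{b-1} g(t) · [ ∑_{s=t}^{b-1} (s-t+1)^{\overline{α(s)-1}} f(s) / Γ(α(s)) ], where x^{\overline{β}} = Γ(x+β)/Γ(x) denotes the rising factorial. -/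
/-- Generalized rising factorial `x^{\overline{β}} = Γ(x+β)/Γ(x)`. -/
noncomputable def rise (x β : ℝ) : ℝ := Real.Gamma (x + β) / Real.Gamma x

/-- Summation by parts: type I left nabla fractional sum vs type II right nabla
fractional sum of variable order. -/
theorem sum_by_parts_typeI_left_typeII_right
    (a b : ℤ) (hab : a < b) (f g : ℤ → ℝ) (α : ℤ → ℝ)
    (hα : ∀ t, 0 < α t ∧ α t ≤ 1) :
    ∑ t ∈ Finset.Icc (a + 1) (b - 1), f t *
      ((1 / Real.Gamma (α t)) *
        ∑ s ∈ Finset.Icc (a + 1) t, rise ((t : ℝ) - s + 1) (α t - 1) * g s)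
    = ∑ t ∈ Finset.Icc (a + 1) (b - 1), g t *
      (∑ s ∈ Finset.Icc t (b - 1),
        rise ((s : ℝ) - t + 1) (α s - 1) * f s / Real.Gamma (α s)) := by
  simp only [Finset.mul_sum]
  rw [Finset.sum_comm' (s' := fun s => Finset.Icc s (b - 1)) (t' := Finset.Icc (a + 1) (b - 1))]
  · apply Finset.sum_congr rfl
    intro s hs
    apply Finset.sum_congr rfl
    intro t ht
    ring
  · intro t s
    simp only [Finset.mem_Icc]
    omega
end

section
/- For integers a < b and functions f, g : ℤ → ℝ, and α : ℤ → ℝ with 0 < α(t) ≤ 1, one has ∑_{t=a+1}^{b-1} f(t) · [ (1/Γ(α(t))) ∑_{s=t}^{b-1} (s-t+1)^{\overline{α(t)-1}} g(s) ] = ∑_{t=a+1}^{b-1} g(t) · [ ∑_{s=a+1}^{t} (t-s+1)^{\overline{α(s)-1}} f(s) / Γ(α(s)) ]. -/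
/-- Summation by parts: type I right nabla fractional sum vs type II left nabla
fractional sum of variable order. -/
theorem sum_by_parts_typeI_right_typeII_left
    (a b : ℤ) (hab : a < b) (f g : ℤ → ℝ) (α : ℤ → ℝ)
    (hα : ∀ t, 0 < α t ∧ α t ≤ 1) :
    ∑ t ∈ Finset.Icc (a + 1) (b - 1), f t *
      ((1 / Real.Gamma (α t)) *
        ∑ s ∈ Finset.Icc t (b - 1), rise ((s : ℝ) - t + 1) (α t - 1) * g s)
    = ∑ t ∈ Finset.Icc (a + 1) (b - 1), g t *
      (∑ s ∈ Finset.Icc (a + 1) t,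
        rise ((t : ℝ) - s + 1) (α s - 1) * f s / Real.Gamma (α s)) := by
  simp_rw [Finset.mul_sum]
  rw [Finset.sum_comm' (t' := Finset.Icc (a + 1) (b - 1)) (s' := fun s => Finset.Icc (a + 1) s) (fun t s => by
    simp only [Finset.mem_Icc]
    constructor <;> rintro ⟨⟨h1, h2⟩, h3, h4⟩ <;> exact ⟨⟨by omega, by omega⟩, by omega, by omega⟩)]
  apply Finset.sum_congr rfl
  intro s _
  apply Finset.sum_congr rfl
  intro t _
  ring
end

section
/- Let a < b be integers, α : ℤ → ℝ with 0 < α(t) ≤ 1 for all t, B : ℝ → ℝ a normalization function with B(α(t)) ≠ 0. Define the type I left AB fractional sum (ᴬᴮₐ∇^{-α(t)} g)(t) = ((1-α(t))/B(α(t))) g(t) + (α(t)/(B(α(t)) Γ(α(t)))) ∑_{s=a+1}^{t} (t-s+1)^{\overline{α(t)-1}} g(s), and the type II right AB fractional sum (*ᴬᴮ∇_b^{-α(t)} f)(t) = ((1-α(t))/B(α(t))) f(t) + ∑_{s=t}^{b-1} (α(s)/(B(α(s)) Γ(α(s)))) (s-t+1)^{\overline{α(s)-1}} f(s). Then ∑_{t=a+1}^{b-1}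 f(t) · (ᴬᴮₐ∇^{-α(t)} g)(t) = ∑_{t=a+1}^{b-1} g(t) · (*ᴬᴮ∇_b^{-α(t)} f)(t). -/
/-- Type I left AB nabla fractional sum of variable order. -/
noncomputable def ABleftI (a : ℤ) (α : ℤ → ℝ) (B : ℝ → ℝ) (g : ℤ → ℝ) (t : ℤ) : ℝ :=
  (1 - α t) / B (α t) * g t +
    α t / (B (α t) * Real.Gamma (α t)) *
      ∑ s ∈ Finset.Icc (a + 1) t, rise ((t : ℝ) - s + 1) (α t - 1) * g s

/-- Type II right AB nabla fractional sum of variable order. -/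
noncomputable def ABrightII (b : ℤ) (α : ℤ → ℝ) (B : ℝ → ℝ) (f : ℤ → ℝ) (t : ℤ) : ℝ :=
  (1 - α t) / B (α t) * f t +
    ∑ s ∈ Finset.Icc t (b - 1),
      α s / (B (α s) * Real.Gamma (α s)) * rise ((s : ℝ) - t + 1) (α s - 1) * f s

/-- Integration by parts for AB nabla fractional sums (type I left / type II right). -/
theorem AB_sum_by_parts_I_II
    (a b : ℤ) (hab : a < b) (f g : ℤ → ℝ) (α : ℤ → ℝ) (B : ℝ → ℝ)
    (hα : ∀ t, 0 < α t ∧ α t ≤ 1) (hB : ∀ t, B (α t) ≠ 0) :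
    ∑ t ∈ Finset.Icc (a + 1) (b - 1), f t * ABleftI a α B g t
    = ∑ t ∈ Finset.Icc (a + 1) (b - 1), g t * ABrightII b α B f t := by
  unfold ABleftI ABrightII
  simp only [mul_add, Finset.sum_add_distrib, Finset.mul_sum]
  congr 1
  · exact Finset.sum_congr rfl fun t _ => by ring
  · rw [Finset.sum_comm' (t := fun t => Finset.Icc (a + 1) t)
      (t' := Finset.Icc (a + 1) (b - 1)) (s' := fun s => Finset.Icc s (b - 1))
      (fun t s => by simp only [Finset.mem_Icc]; omega)]
    exact Finset.sum_congr rfl fun s _ => Finset.sum_congr rfl fun t _ => by ring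
end

section
/- Let a < b be integers, α : ℤ → ℝ with 0 < α(t) ≤ 1, B : ℝ → ℝ with B(α(t)) ≠ 0. Define the type II left AB fractional sum (*ᴬᴮₐ∇^{-α(t)} g)(t) = ((1-α(t))/B(α(t))) g(t) + ∑_{s=a+1}^{t} (α(s)/(B(α(s)) Γ(α(s)))) (t-s+1)^{\overline{α(s)-1}} g(s), and the type I right AB fractional sum (ᴬᴮ∇_b^{-α(t)} f)(t) = ((1-α(t))/B(α(t))) f(t) + (α(t)/(B(α(t)) Γ(α(t)))) ∑_{s=t}^{b-1} (s-t+1)^{\overline{α(t)-1}} f(s). Then ∑_{t=a+1}^{b-1} f(t) · (*ᴬᴮₐ∇^{-α(t)} g)(t) = ∑_{t=a+1}^{b-1} g(t) · (ᴬᴮ∇_b^{-α(t)} f)(t). -/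
/-- Type II left AB nabla fractional sum of variable order. -/
noncomputable def ABleftII (a : ℤ) (α : ℤ → ℝ) (B : ℝ → ℝ) (g : ℤ → ℝ) (t : ℤ) : ℝ :=
  (1 - α t) / B (α t) * g t +
    ∑ s ∈ Finset.Icc (a + 1) t,
      α s / (B (α s) * Real.Gamma (α s)) * rise ((t : ℝ) - s + 1) (α s - 1) * g s

/-- Type I right AB nabla fractional sum of variable order. -/
noncomputable def ABrightI (b : ℤ) (α : ℤ → ℝ) (B : ℝ → ℝ) (f : ℤ → ℝ) (t : ℤ) : ℝ :=
  (1 - α t) / B (α t) * f t +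
    α t / (B (α t) * Real.Gamma (α t)) *
      ∑ s ∈ Finset.Icc t (b - 1), rise ((s : ℝ) - t + 1) (α t - 1) * f s

/-- Integration by parts for AB nabla fractional sums (type II left / type I right). -/
theorem AB_sum_by_parts_II_I
    (a b : ℤ) (hab : a < b) (f g : ℤ → ℝ) (α : ℤ → ℝ) (B : ℝ → ℝ)
    (hα : ∀ t, 0 < α t ∧ α t ≤ 1) (hB : ∀ t, B (α t) ≠ 0) :
    ∑ t ∈ Finset.Icc (a + 1) (b - 1), f t * ABleftII a α B g t
    = ∑ t ∈ Finset.Icc (a + 1) (b - 1), g t * ABrightI b α B f t := by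
  simp only [ABleftII, ABrightI, mul_add, Finset.sum_add_distrib, Finset.mul_sum]
  congr 1
  · exact Finset.sum_congr rfl fun t _ => by ring
  · rw [Finset.sum_comm' (t' := Finset.Icc (a + 1) (b - 1))
      (s' := fun s => Finset.Icc s (b - 1))
      (fun t s => by simp only [Finset.mem_Icc]; omega)]
    exact Finset.sum_congr rfl fun s _ => Finset.sum_congr rfl fun t _ => by ring
end

section
/- Let a < b be integers, K : ℤ × ℤ → ℝ a kernel, f, g : ℤ → ℝ. Define the discrete right operator (ℰ_{b^-} f)(t) = ∑_{s=t}^{b-1} K(s,t) f(s), the backward difference (∇h)(t) = h(t) − h(t−1), the forward difference (Δh)(t) = h(t+1) − h(t), the left Caputo-type difference (ᴬᴮᶜₐ∇ g)(t) = ∑_{s=a+1}^{t} K(t,s) (∇g)(s), and the right Riemann–Liouville-type difference (ᴬᴮᴿ∇̂_b f)(t) = −(Δ (ℰ_{b^-} f))(t). Then ∑_{t=a+1}^{b-1} f(t) · (ᴬᴮᶜₐ∇ g)(t) = [g(b-1)(ℰ_{b^-} f)(b-1) − g(a)(ℰ_{b^-} f)(a)] + ∑_{t=a+1}^{b-1}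 g(t−1) · (ᴬᴮᴿ∇̂_b f)(t−1). -/
/-- Discrete right kernel operator `(ℰ_{b^-} f)(t) = ∑_{s=t}^{b-1} K(s,t) f(s)`. -/
noncomputable def Eright (K : ℤ × ℤ → ℝ) (b : ℤ) (f : ℤ → ℝ) (t : ℤ) : ℝ :=
  ∑ s ∈ Finset.Icc t (b - 1), K (s, t) * f s

/-- Left Caputo-type AB difference with kernel `K`. -/
noncomputable def ABCleft (K : ℤ × ℤ → ℝ) (a : ℤ) (g : ℤ → ℝ) (t : ℤ) : ℝ :=
  ∑ s ∈ Finset.Icc (a + 1) t, K (t, s) * (g s - g (s - 1))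

/-- Right Riemann–Liouville-type AB difference with kernel `K`. -/
noncomputable def ABRright (K : ℤ × ℤ → ℝ) (b : ℤ) (f : ℤ → ℝ) (t : ℤ) : ℝ :=
  -(Eright K b f (t + 1) - Eright K b f t)

lemma telescope_aux (F : ℤ → ℝ) (a : ℤ) (n : ℕ) :
    ∑ t ∈ Finset.Icc (a + 1) (a + (n : ℤ)), (F t - F (t - 1)) = F (a + (n : ℤ)) - F a := by
  induction n with
  | zero => simp
  | succ n ih =>
      have h1 : Finset.Icc (a + 1) (a + ((n : ℤ) + 1))
          = insert (a + (n : ℤ) + 1) (Finset.Icc (a + 1) (a + (n : ℤ))) := by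
        ext x; simp only [Finset.mem_Icc, Finset.mem_insert]; omega
      push_cast
      rw [h1, Finset.sum_insert (by simp), ih]
      have h2 : a + (n : ℤ) + 1 - 1 = a + (n : ℤ) := by ring
      rw [h2]; ring_nf

/-- Telescoping sum over an integer interval. -/
lemma telescope_Icc (F : ℤ → ℝ) (a c : ℤ) (hc : a ≤ c) :
    ∑ t ∈ Finset.Icc (a + 1) c, (F t - F (t - 1)) = F c - F a := by
  obtain ⟨n, rfl⟩ := Int.le.dest hc
  exact telescope_aux F a n

theorem sum_swap_aux (a b : ℤ) (K : ℤ × ℤ → ℝ) (f dg : ℤ → ℝ) :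
    ∑ t ∈ Finset.Icc (a + 1) (b - 1), ∑ s ∈ Finset.Icc (a + 1) t, f t * (K (t, s) * dg s)
    = ∑ s ∈ Finset.Icc (a + 1) (b - 1), ∑ t ∈ Finset.Icc s (b - 1), f t * (K (t, s) * dg s) := by
  apply Finset.sum_comm'
  intro t s
  simp only [Finset.mem_Icc]
  omega

/-- Summation by parts relating the left Caputo and right Riemann–Liouville
AB fractional differences (abstract kernel form). -/
theorem ABC_left_ABR_right_by_parts
    (a b : ℤ) (hab : a < b) (K : ℤ × ℤ → ℝ) (f g : ℤ → ℝ) :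
    ∑ t ∈ Finset.Icc (a + 1) (b - 1), f t * ABCleft K a g t
    = (g (b - 1) * Eright K b f (b - 1) - g a * Eright K b f a)
      + ∑ t ∈ Finset.Icc (a + 1) (b - 1), g (t - 1) * ABRright K b f (t - 1) := by
  set E : ℤ → ℝ := Eright K b f with hE
  -- Step 1: swap the double sum
  have hswap : ∑ t ∈ Finset.Icc (a + 1) (b - 1), f t * ABCleft K a g t
      = ∑ s ∈ Finset.Icc (a + 1) (b - 1), (g s - g (s - 1)) * E s := by
    simp only [ABCleft, Finset.mul_sum]
    rw [sum_swap_aux a b K f (fun s => g s - g (s - 1))]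
    refine Finset.sum_congr rfl fun s _ => ?_
    rw [hE]
    simp only [Eright, Finset.mul_sum]
    exact Finset.sum_congr rfl fun x _ => by ring
  -- Step 2: ABRright at t-1 equals E(t-1) - E t
  have hABR : ∀ t : ℤ, g (t - 1) * ABRright K b f (t - 1)
      = -(g (t - 1) * (E t - E (t - 1))) := by
    intro t
    simp only [ABRright, hE]
    have : t - 1 + 1 = t := by ring
    rw [this]
    ring
  have htel := telescope_Icc (fun t => g t * E t) a (b - 1) (by omega)
  have key : ∑ t ∈ Finset.Icc (a + 1) (b - 1),
      ((g t - g (t - 1)) * E t + g (t - 1) * (E t - E (t - 1)))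
      = g (b - 1) * E (b - 1) - g a * E a := by
    rw [← htel]
    refine Finset.sum_congr rfl fun t _ => ?_
    ring
  rw [hswap]
  simp only [hABR]
  rw [Finset.sum_neg_distrib]
  have := Finset.sum_add_distrib (s := Finset.Icc (a + 1) (b - 1))
    (f := fun t => (g t - g (t - 1)) * E t) (g := fun t => g (t - 1) * (E t - E (t - 1)))
  rw [this] at key
  linarith
end

section
/- Let a < b be integers, K : ℤ × ℤ → ℝ a kernel, f, g : ℤ → ℝ. Define (E_{a^+} f)(t) = ∑_{s=a+1}^{t} K(s,t) f(s), the right Caputo-type difference (ᴬᴮᶜ∇_b g)(t) = −∑_{s=t}^{b-1} K(t,s) (Δg)(s) with (Δg)(s) = g(s+1) − g(s), and the left Riemann–Liouville-type difference (ᴬᴮᴿₐ∇̂ f)(t) = (∇(E_{a^+} f))(t) with (∇h)(t) = h(t) − h(t−1). Then ∑_{t=a+1}^{b-1} f(t) · (ᴬᴮᶜ∇_b g)(t) = −[g(b)(E_{a^+} f)(b) − g(a+1)(E_{a^+} f)(a+1)] + ∑_{t=a+1}^{b-1} g(t+1) · (ᴬᴮᴿₐ∇̂ f)(t+1). -/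
/-- Discrete left kernel operator `(E_{a^+} f)(t) = ∑_{s=a+1}^{t} K(s,t) f(s)`. -/
noncomputable def Eleft (K : ℤ × ℤ → ℝ) (a : ℤ) (f : ℤ → ℝ) (t : ℤ) : ℝ :=
  ∑ s ∈ Finset.Icc (a + 1) t, K (s, t) * f s

/-- Right Caputo-type AB difference with kernel `K`. -/
noncomputable def ABCright (K : ℤ × ℤ → ℝ) (b : ℤ) (g : ℤ → ℝ) (t : ℤ) : ℝ :=
  -∑ s ∈ Finset.Icc t (b - 1), K (t, s) * (g (s + 1) - g s)

/-- Left Riemann–Liouville-type AB difference with kernel `K`. -/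
noncomputable def ABRleft (K : ℤ × ℤ → ℝ) (a : ℤ) (f : ℤ → ℝ) (t : ℤ) : ℝ :=
  Eleft K a f t - Eleft K a f (t - 1)

/-- Summation by parts relating the right Caputo and left Riemann–Liouville
AB fractional differences (abstract kernel form). -/
theorem ABC_right_ABR_left_by_parts
    (a b : ℤ) (hab : a < b) (K : ℤ × ℤ → ℝ) (f g : ℤ → ℝ) :
    ∑ t ∈ Finset.Icc (a + 1) (b - 1), f t * ABCright K b g t
    = -(g b * Eleft K a f b - g (a + 1) * Eleft K a f (a + 1))
      + ∑ t ∈ Finset.Icc (a + 1) (b - 1), g (t + 1) * ABRleft K a f (t + 1) := by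
  set E := Eleft K a f with hE
  -- telescoping lemma
  have tele : ∀ h : ℤ → ℝ, ∑ s ∈ Finset.Icc (a + 1) (b - 1), (h (s + 1) - h s)
      = h b - h (a + 1) := by
    intro h
    have main : ∀ c : ℤ, a ≤ c →
        ∑ s ∈ Finset.Icc (a + 1) c, (h (s + 1) - h s) = h (c + 1) - h (a + 1) := by
      refine Int.le_induction ?_ ?_
      · rw [Finset.Icc_eq_empty (by omega)]
        simp
      · intro c hc ih
        have hins : Finset.Icc (a + 1) (c + 1) = insert (c + 1) (Finset.Icc (a + 1) c) := by
          ext x; simp only [Finset.mem_Icc, Finset.mem_insert]; omega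
        rw [hins, Finset.sum_insert (by simp), ih]
        ring
    have := main (b - 1) (by omega)
    simpa [show b - 1 + 1 = b by ring] using this
  -- swap the double sum on the LHS
  have lhs_eq : ∑ t ∈ Finset.Icc (a + 1) (b - 1), f t * ABCright K b g t
      = ∑ s ∈ Finset.Icc (a + 1) (b - 1), (-(g (s + 1) - g s) * E s) := by
    have swap : ∑ t ∈ Finset.Icc (a + 1) (b - 1),
          ∑ s ∈ Finset.Icc t (b - 1), (-(f t * (K (t, s) * (g (s + 1) - g s))))
        = ∑ s ∈ Finset.Icc (a + 1) (b - 1),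
          ∑ t ∈ Finset.Icc (a + 1) s, (-(f t * (K (t, s) * (g (s + 1) - g s)))) := by
      apply Finset.sum_comm'
      intro x y
      simp only [Finset.mem_Icc]
      omega
    calc ∑ t ∈ Finset.Icc (a + 1) (b - 1), f t * ABCright K b g t
        = ∑ t ∈ Finset.Icc (a + 1) (b - 1),
            ∑ s ∈ Finset.Icc t (b - 1), (-(f t * (K (t, s) * (g (s + 1) - g s)))) := by
          refine Finset.sum_congr rfl fun t _ => ?_
          rw [ABCright, mul_neg, Finset.mul_sum, ← Finset.sum_neg_distrib]
      _ = ∑ s ∈ Finset.Icc (a + 1) (b - 1),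
            ∑ t ∈ Finset.Icc (a + 1) s, (-(f t * (K (t, s) * (g (s + 1) - g s)))) := swap
      _ = ∑ s ∈ Finset.Icc (a + 1) (b - 1), (-(g (s + 1) - g s) * E s) := by
          refine Finset.sum_congr rfl fun s _ => ?_
          rw [hE, Eleft, Finset.mul_sum]
          exact Finset.sum_congr rfl fun t _ => by ring
  -- rewrite the RHS sum
  have rhs_eq : ∑ t ∈ Finset.Icc (a + 1) (b - 1), g (t + 1) * ABRleft K a f (t + 1)
      = ∑ t ∈ Finset.Icc (a + 1) (b - 1), g (t + 1) * (E (t + 1) - E t) := by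
    refine Finset.sum_congr rfl fun t _ => ?_
    rw [ABRleft, show t + 1 - 1 = t by ring, hE]
  rw [lhs_eq, rhs_eq]
  have key := tele (fun s => g s * E s)
  have expand : ∑ s ∈ Finset.Icc (a + 1) (b - 1), (-(g (s + 1) - g s) * E s)
      = ∑ s ∈ Finset.Icc (a + 1) (b - 1), (g (s + 1) * (E (s + 1) - E s))
        - ∑ s ∈ Finset.Icc (a + 1) (b - 1),
            ((fun s => g s * E s) (s + 1) - (fun s => g s * E s) s) := by
    rw [← Finset.sum_sub_distrib]
    exact Finset.sum_congr rfl fun s _ => by simp; ring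
  rw [expand, key]
  ring
end
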